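/- Let R be a commutative ring with a permutable weak regular sequence s_1,…,s_k of non-units, S = R[x_1,…,x_n], and F = S^r with standard basis e_1,…,e_r. For l = 1,…,m let f_l = c_l·b_l·x^{u_l}·e_{k_l}, where c_l is a unit of R, b_l = ∏_j s_j^{α_{lj}} is an s-monomial, u_l ∈ ℕ^n, and k_l ∈ {1,…,r}. Let φ : S^m → F be the S-linear map sending the standard basis vector g_l to f_l. Then the kernel of φ is generated by the elements r_{ij} = c_i^{−1}(∏_t s_t^{max(α_{it},α_{jt})−α_{it}})·x^{sup(u_i,u_j)−u_i}·g_i − c_j^{−1}(∏_t s_t^{max(α_{it},α_{jt})−α_{jt}})·x^{sup(u_i,u_j)−u_j}·g_j, taken over all pairs 1 ≤ i < j ≤ m with k_i = k_j, where sup(u_i,u_j) is the componentwise maximum in ℕ^n. -/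

import Mathlib

open MvPolynomial
open scoped MonomialOrder

namespace PaperGB

variable {n : ℕ} {R : Type*} [CommSemiring R]

/-- The degree (leading exponent) of a multivariate polynomial w.r.t. a monomial order. -/
noncomputable def mDeg (m : MonomialOrder (Fin n)) (f : MvPolynomial (Fin n) R) :
    Fin n →₀ ℕ :=
  m.toSyn.symm (f.support.sup fun d => m.toSyn d)

/-- The leading coefficient. -/
noncomputable def mLC (m : MonomialOrder (Fin n)) (f : MvPolynomial (Fin n) R) : R :=
  f.coeff (mDeg m f)

/-- The leading term. -/
noncomputable def mLT (m : MonomialOrder (Fin n)) (f : MvPolynomial (Fin n) R) :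
    MvPolynomial (Fin n) R :=
  monomial (mDeg m f) (mLC m f)

variable {R : Type*} [CommRing R]

/-- The leading term ideal. -/
noncomputable def mLTIdeal (m : MonomialOrder (Fin n)) (I : Ideal (MvPolynomial (Fin n) R)) :
    Ideal (MvPolynomial (Fin n) R) :=
  Ideal.span ((fun g => mLT m g) '' {g | g ∈ I ∧ g ≠ 0})

/-- `f` is a Gröbner basis of `I`. -/
def IsGroebnerBasis (m : MonomialOrder (Fin n)) (I : Ideal (MvPolynomial (Fin n) R))
    {k : ℕ} (f : Fin k → MvPolynomial (Fin n) R) : Prop :=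
  (∀ i, f i ≠ 0) ∧ (∀ i, f i ∈ I) ∧
    Ideal.span (Set.range fun i => mLT m (f i)) = mLTIdeal m I

/-- `g` reduces to zero modulo the family `f`. -/
def ReducesToZero (m : MonomialOrder (Fin n)) {k : ℕ} (f : Fin k → MvPolynomial (Fin n) R)
    (g : MvPolynomial (Fin n) R) : Prop :=
  ∃ p : Fin k → MvPolynomial (Fin n) R,
    g = ∑ i, p i * f i ∧
    ∀ i, p i * f i ≠ 0 → mDeg m (p i) + mDeg m (f i) ≼[m] mDeg m g

/-- A weakly regular sequence. -/
def IsWeakRegularSeq {k : ℕ} (s : Fin k → R) : Prop :=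
  ∀ i : Fin k, ∀ x : R,
    s i * x ∈ Ideal.span (s '' {j | j < i}) → x ∈ Ideal.span (s '' {j | j < i})

/-- A permutable weak regular sequence of non-units. -/
def IsPermutableWeakRegularSeq {k : ℕ} (s : Fin k → R) : Prop :=
  (∀ i, ¬ IsUnit (s i)) ∧ ∀ σ : Equiv.Perm (Fin k), IsWeakRegularSeq (s ∘ σ)

/-- `M` has a free resolution `0 → F_p → ⋯ → F_0 → M → 0` by finitely generated
free `S`-modules. -/
def HasFiniteFreeResolutionOfLength (S : Type*) [CommRing S] (M : Type*) [AddCommGroup M]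
    [Module S M] (p : ℕ) : Prop :=
  ∃ (d : ℕ → ℕ) (g : ∀ i : ℕ, (Fin (d (i + 1)) → S) →ₗ[S] (Fin (d i) → S))
    (ε : (Fin (d 0) → S) →ₗ[S] M),
    (∀ i, p < i → d i = 0) ∧
    Function.Surjective ε ∧
    LinearMap.range (g 0) = LinearMap.ker ε ∧
    ∀ i, LinearMap.range (g (i + 1)) = LinearMap.ker (g i)

/-- `M` has an infinite free resolution `⋯ → F_p → F_p → F_p → F_{p-1} → ⋯ → F_0 → M → 0`
by finitely generated free `S`-modules, whose modules are constant from stage `p` on. -/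
def HasEventuallyConstantFreeResolution (S : Type*) [CommRing S] (M : Type*) [AddCommGroup M]
    [Module S M] (p : ℕ) : Prop :=
  ∃ (d : ℕ → ℕ) (g : ∀ i : ℕ, (Fin (d (i + 1)) → S) →ₗ[S] (Fin (d i) → S))
    (ε : (Fin (d 0) → S) →ₗ[S] M),
    (∀ i, p ≤ i → d i = d p) ∧
    Function.Surjective ε ∧
    LinearMap.range (g 0) = LinearMap.ker ε ∧
    ∀ i, LinearMap.range (g (i + 1)) = LinearMap.ker (g i)

end PaperGB

open PaperGB



universe u

namespace SyzHelper

/-- predicate needed for the syzygy theorem: every element is a nonzerodivisor and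
the property passes to quotients by any element (with that element removed). -/
def GoodSeq : ∀ (k : ℕ) (A : Type u) [CommRing A], (Fin k → A) → Prop
  | 0, _, _, _ => True
  | (k+1), A, _, s => ∀ t0 : Fin (k+1),
      (∀ x : A, s t0 * x = 0 → x = 0) ∧
      GoodSeq k (A ⧸ Ideal.span {s t0})
        (fun t => Ideal.Quotient.mk (Ideal.span {s t0}) (s (t0.succAbove t)))

/-- the basic binomial syzygy -/
noncomputable def syz {A : Type u} [CommRing A] {k M : ℕ} (s : Fin k → A)
    (α : Fin M → Fin k → ℕ) (i j : Fin M) : Fin M → A :=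
  Pi.single i (∏ t, s t ^ (max (α i t) (α j t) - α i t))
    - Pi.single j (∏ t, s t ^ (max (α i t) (α j t) - α j t))

lemma syz_apply {A : Type u} [CommRing A] {k M : ℕ} (s : Fin k → A)
    (α : Fin M → Fin k → ℕ) (i j l : Fin M) :
    syz s α i j l = (if l = i then ∏ t, s t ^ (max (α i t) (α j t) - α i t) else 0)
      - (if l = j then ∏ t, s t ^ (max (α i t) (α j t) - α j t) else 0) := by
  simp [syz, Pi.single_apply]

lemma syz_apply_ne {A : Type u} [CommRing A] {k M : ℕ} (s : Fin k → A)
    (α : Fin M → Fin k → ℕ) {i j l : Fin M} (hi : l ≠ i) (hj : l ≠ j) :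
    syz s α i j l = 0 := by
  simp [syz_apply, hi, hj]

lemma syz_is_syzygy {A : Type u} [CommRing A] {k M : ℕ} (s : Fin k → A)
    (α : Fin M → Fin k → ℕ) (i j : Fin M) :
    ∑ l, syz s α i j l * ∏ t, s t ^ α l t = 0 := by
  have key : ∀ (β δ : Fin k → ℕ), (∀ t, δ t ≤ β t) →
      (∏ t, s t ^ (β t - δ t)) * ∏ t, s t ^ δ t = ∏ t, s t ^ β t := by
    intro β δ h
    rw [← Finset.prod_mul_distrib]
    exact Finset.prod_congr rfl fun t _ => by rw [← pow_add, Nat.sub_add_cancel (h t)]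
  simp only [syz_apply, sub_mul, Finset.sum_sub_distrib, ite_mul, zero_mul]
  rw [Finset.sum_ite_eq' Finset.univ i, Finset.sum_ite_eq' Finset.univ j]
  simp only [Finset.mem_univ, if_true]
  rw [key (fun t => max (α i t) (α j t)) (α i) (fun t => le_max_left _ _),
    key (fun t => max (α i t) (α j t)) (α j) (fun t => le_max_right _ _), sub_self]

lemma component_sum_zero {A : Type u} [CommRing A] {k M : ℕ} (s : Fin k → A)
    (α : Fin M → Fin k → ℕ) (lam : Fin M → Fin M → A) (l : Fin M)
    (h : ∀ i j, lam i j ≠ 0 → l ≠ i ∧ l ≠ j) :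
    (∑ i, ∑ j, lam i j • syz s α i j) l = 0 := by
  rw [Finset.sum_apply]
  refine Finset.sum_eq_zero fun i _ => ?_
  rw [Finset.sum_apply]
  refine Finset.sum_eq_zero fun j _ => ?_
  by_cases hl : lam i j = 0
  · simp [hl]
  · obtain ⟨h1, h2⟩ := h i j hl
    simp [syz_apply_ne s α h1 h2]

lemma rep_syzygy {A : Type u} [CommRing A] {k M : ℕ} (s : Fin k → A)
    (α : Fin M → Fin k → ℕ) (lam : Fin M → Fin M → A) :
    ∑ l, (∑ i, ∑ j, lam i j • syz s α i j) l * ∏ t, s t ^ α l t = 0 := by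
  simp only [Finset.sum_apply, Pi.smul_apply, smul_eq_mul, Finset.sum_mul]
  rw [Finset.sum_comm]
  refine Finset.sum_eq_zero fun i _ => ?_
  rw [Finset.sum_comm]
  refine Finset.sum_eq_zero fun j _ => ?_
  rw [show ∀ f : Fin M → A, (∑ l, lam i j * syz s α i j l * f l) = lam i j * ∑ l, syz s α i j l * f l by
    intro f; rw [Finset.mul_sum]; exact Finset.sum_congr rfl fun l _ => by ring]
  rw [syz_is_syzygy, mul_zero]

lemma baseRep {A : Type u} [CommRing A] {M : ℕ} (Z : Set (Fin M)) (a : Fin M → A)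
    (hZ : ∀ l ∈ Z, a l = 0) (hrel : ∑ l, a l = 0) :
    ∃ lam : Fin M → Fin M → A, (∀ i j, lam i j ≠ 0 → i ∉ Z ∧ j ∉ Z) ∧
      a = ∑ i, ∑ j, lam i j • ((Pi.single i 1 - Pi.single j 1) : Fin M → A) := by
  by_cases ha : a = 0
  · exact ⟨0, by simp, by simp [ha]⟩
  · obtain ⟨l0, hl0⟩ := Function.ne_iff.mp ha
    simp only [Pi.zero_apply] at hl0
    refine ⟨fun i j => if j = l0 then a i else 0, ?_, ?_⟩
    · intro i j h
      simp only at h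
      by_cases hj : j = l0
      · rw [if_pos hj] at h
        exact ⟨fun hi => h (hZ i hi), fun hjZ => hl0 (hZ l0 (hj ▸ hjZ))⟩
      · exact absurd (if_neg hj) h
    · have : ∀ i : Fin M, (∑ j, (if j = l0 then a i else 0) •
          ((Pi.single i 1 - Pi.single j 1) : Fin M → A))
          = Pi.single i (a i) - a i • (Pi.single l0 1 : Fin M → A) := by
        intro i
        rw [Finset.sum_eq_single l0]
        · rw [if_pos rfl, smul_sub]
          congr 1
          rw [← Pi.single_smul, smul_eq_mul, mul_one]
        · intro j _ hj; rw [if_neg hj, zero_smul]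
        · intro h; exact absurd (Finset.mem_univ l0) h
      simp only [this]
      rw [Finset.sum_sub_distrib, Finset.univ_sum_single, ← Finset.sum_smul, hrel, zero_smul,
        sub_zero]

lemma keyProd {A : Type u} [CommRing A] {k : ℕ} (s : Fin (k+1) → A) (t0 : Fin (k+1))
    (m1 m2 : Fin (k+1) → ℕ) (E1 E2 : ℕ) (hoff : ∀ t, t ≠ t0 → m1 t = m2 t)
    (ht0 : E1 + m1 t0 = E2 + m2 t0) :
    s t0 ^ E1 * ∏ t, s t ^ m1 t = s t0 ^ E2 * ∏ t, s t ^ m2 t := by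
  rw [Fin.prod_univ_succAbove (fun t => s t ^ m1 t) t0,
    Fin.prod_univ_succAbove (fun t => s t ^ m2 t) t0, ← mul_assoc, ← mul_assoc,
    ← pow_add, ← pow_add, ht0]
  congr 1
  exact Finset.prod_congr rfl fun t _ => by rw [hoff _ (Fin.succAbove_ne t0 t)]

lemma lemT_of_triv {A : Type u} [CommRing A] {k M : ℕ} (s : Fin k → A)
    (α : Fin M → Fin k → ℕ) (hα : ∀ l t, α l t = 0) (Z : Set (Fin M)) (a : Fin M → A)
    (hZ : ∀ l ∈ Z, a l = 0) (hrel : (∑ l, a l * ∏ t, s t ^ α l t) = 0) :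
    ∃ lam : Fin M → Fin M → A,
      (∀ i j, lam i j ≠ 0 → i ∉ Z ∧ j ∉ Z) ∧
      a = ∑ i : Fin M, ∑ j : Fin M, lam i j • syz s α i j := by
  simp only [hα, pow_zero, Finset.prod_const_one, mul_one] at hrel
  obtain ⟨lam, h1, h2⟩ := baseRep Z a hZ hrel
  refine ⟨lam, h1, ?_⟩
  have : ∀ i j : Fin M, syz s α i j = (Pi.single i 1 - Pi.single j 1 : Fin M → A) := by
    intro i j; simp [syz, hα]
  simp only [this]
  exact h2

lemma prod_pow_sub_mul {A : Type u} [CommRing A] {k : ℕ} (s : Fin k → A) (β δ : Fin k → ℕ)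
    (h : ∀ t, δ t ≤ β t) :
    (∏ t, s t ^ (β t - δ t)) * ∏ t, s t ^ δ t = ∏ t, s t ^ β t := by
  rw [← Finset.prod_mul_distrib]
  exact Finset.prod_congr rfl fun t _ => by rw [← pow_add, Nat.sub_add_cancel (h t)]

lemma syz_self {A : Type u} [CommRing A] {k M : ℕ} (s : Fin k → A)
    (α : Fin M → Fin k → ℕ) (i : Fin M) : syz s α i i = 0 := sub_self _
theorem lemT : ∀ (k : ℕ) (A : Type u) [CommRing A] (s : Fin k → A),
    GoodSeq k A s → ∀ (M : ℕ) (α : Fin M → Fin k → ℕ) (Z : Set (Fin M)) (a : Fin M → A),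
    (∀ l ∈ Z, a l = 0) → (∑ l, a l * ∏ t, s t ^ α l t) = 0 →
    ∃ lam : Fin M → Fin M → A,
      (∀ i j, lam i j ≠ 0 → i ∉ Z ∧ j ∉ Z) ∧
      a = ∑ i : Fin M, ∑ j : Fin M, lam i j • syz s α i j := by
  intro k
  induction k with
  | zero =>
    intro A _ s _ M α Z a hZ hrel
    exact lemT_of_triv s α (fun l t => t.elim0) Z a hZ hrel
  | succ k ihk =>
    suffices H : ∀ (D : ℕ) (A : Type u) [CommRing A] (s : Fin (k+1) → A),
        GoodSeq (k+1) A s → ∀ (M : ℕ) (α : Fin M → Fin (k+1) → ℕ),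
        (∑ l, ∑ t, α l t) ≤ D → ∀ (Z : Set (Fin M)) (a : Fin M → A),
        (∀ l ∈ Z, a l = 0) → (∑ l, a l * ∏ t, s t ^ α l t) = 0 →
        ∃ lam : Fin M → Fin M → A,
          (∀ i j, lam i j ≠ 0 → i ∉ Z ∧ j ∉ Z) ∧
          a = ∑ i : Fin M, ∑ j : Fin M, lam i j • syz s α i j by
      intro A _ s hs M α Z a hZ hrel
      exact H (∑ l, ∑ t, α l t) A s hs M α le_rfl Z a hZ hrel
    intro D
    induction D with
    | zero =>
      intro A _ s hs M α hD Z a hZ hrel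
      refine lemT_of_triv s α (fun l t => ?_) Z a hZ hrel
      have h1 : ∑ l, ∑ t, α l t = 0 := Nat.le_zero.mp hD
      rw [Finset.sum_eq_zero_iff] at h1
      have h2 := h1 l (Finset.mem_univ l)
      rw [Finset.sum_eq_zero_iff] at h2
      exact h2 t (Finset.mem_univ t)
    | succ D ihD =>
      intro A _A s hs M α hD Z a hZ hrel
      by_cases hall : ∀ l t, α l t = 0
      · exact lemT_of_triv s α hall Z a hZ hrel
      push_neg at hall
      obtain ⟨l1, t0, hl1⟩ := hall
      set I : Ideal A := Ideal.span {s t0} with hI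
      set π : A →+* A ⧸ I := Ideal.Quotient.mk I with hπ
      have hπs : π (s t0) = 0 := by
        rw [hπ, Ideal.Quotient.eq_zero_iff_mem]
        exact Ideal.mem_span_singleton_self _
      set s' : Fin k → A ⧸ I := fun t => π (s (t0.succAbove t)) with hs'def
      have hs' : GoodSeq k (A ⧸ I) s' := (hs t0).2
      set α' : Fin M → Fin k → ℕ := fun l t => α l (t0.succAbove t) with hα'
      set Z' : Set (Fin M) := Z ∪ {l | α l t0 ≠ 0} with hZ'def
      set a' : Fin M → A ⧸ I := fun l => if α l t0 = 0 then π (a l) else 0 with ha'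
      have hZa' : ∀ l ∈ Z', a' l = 0 := by
        intro l hl
        rcases hl with hl | hl
        · by_cases h0 : α l t0 = 0
          · simp only [ha', if_pos h0, hZ l hl, map_zero]
          · simp only [ha', if_neg h0]
        · simp only [ha', if_neg hl]
      -- the relation in the quotient
      have hrel' : ∑ l, a' l * ∏ t, s' t ^ α' l t = 0 := by
        have : ∀ l : Fin M, a' l * ∏ t, s' t ^ α' l t = π (a l * ∏ t, s t ^ α l t) := by
          intro l
          rw [map_mul, map_prod]
          simp only [map_pow]
          by_cases h0 : α l t0 = 0
          · simp only [ha', if_pos h0]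
            congr 1
            rw [Fin.prod_univ_succAbove (fun t => π (s t) ^ α l t) t0, h0, pow_zero, one_mul]
          · simp only [ha', if_neg h0]
            rw [Fin.prod_univ_succAbove (fun t => π (s t) ^ α l t) t0, hπs, zero_pow h0]
            simp
        rw [Finset.sum_congr rfl fun l _ => this l, ← map_sum, hrel, map_zero]
      obtain ⟨lam', hlam'Z, hrep'⟩ := ihk (A ⧸ I) s' hs' M α' Z' a' hZa' hrel'
      -- lift lam'
      have hlift : ∀ i j : Fin M, ∃ x : A, π x = lam' i j ∧ (lam' i j = 0 → x = 0) := by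
        intro i j
        by_cases h0 : lam' i j = 0
        · exact ⟨0, by rw [map_zero, h0], fun _ => rfl⟩
        · obtain ⟨x, hx⟩ := Ideal.Quotient.mk_surjective (lam' i j)
          exact ⟨x, hx, fun h => absurd h h0⟩
      choose lam hlam hlam0 using hlift
      have hlamZ' : ∀ i j, lam i j ≠ 0 → i ∉ Z' ∧ j ∉ Z' := by
        intro i j h
        refine hlam'Z i j fun h0 => h (hlam0 i j h0)
      have hZ'mem : ∀ {l : Fin M}, l ∉ Z' → α l t0 = 0 := by
        intro l hl
        by_contra h0
        exact hl (Or.inr h0)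
      -- lifting products with zero t0-exponent
      have prodlift : ∀ (m : Fin (k+1) → ℕ), m t0 = 0 →
          π (∏ t, s t ^ m t) = ∏ t, s' t ^ m (t0.succAbove t) := by
        intro m hm
        rw [map_prod]
        simp only [map_pow]
        rw [Fin.prod_univ_succAbove (fun t => π (s t) ^ m t) t0, hm, pow_zero, one_mul]
      -- lifting of syzygies
      have hsyzlift : ∀ i j : Fin M, α i t0 = 0 → α j t0 = 0 →
          ∀ l, π (syz s α i j l) = syz s' α' i j l := by
        intro i j hi hj l
        simp only [syz_apply, map_sub, apply_ite π, map_zero]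
        rw [prodlift (fun t => max (α i t) (α j t) - α i t) (by simp [hi, hj]),
          prodlift (fun t => max (α i t) (α j t) - α j t) (by simp [hi, hj])]
      -- the difference g
      set g : Fin M → A :=
        (fun l => if α l t0 = 0 then a l else 0) - ∑ i, ∑ j, lam i j • syz s α i j with hg
      have hsumZ' : ∀ l ∈ Z', (∑ i, ∑ j, lam i j • syz s α i j) l = 0 := by
        intro l hl
        refine component_sum_zero s α lam l fun i j hne => ?_
        obtain ⟨hiZ, hjZ⟩ := hlamZ' i j hne
        exact ⟨fun h => hiZ (h ▸ hl), fun h => hjZ (h ▸ hl)⟩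
      have hgZ : ∀ l ∈ Z', g l = 0 := by
        intro l hl
        simp only [hg, Pi.sub_apply, hsumZ' l hl, sub_zero]
        rcases hl with hl | hl
        · by_cases h0 : α l t0 = 0
          · rw [if_pos h0]; exact hZ l hl
          · rw [if_neg h0]
        · rw [if_neg hl]
      have hgI : ∀ l, π (g l) = 0 := by
        intro l
        simp only [hg, Pi.sub_apply, map_sub]
        have h1 : π ((∑ i, ∑ j, lam i j • syz s α i j) l)
            = (∑ i, ∑ j, lam' i j • syz s' α' i j) l := by
          rw [Finset.sum_apply, Finset.sum_apply, map_sum]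
          refine Finset.sum_congr rfl fun i _ => ?_
          rw [Finset.sum_apply, Finset.sum_apply, map_sum]
          refine Finset.sum_congr rfl fun j _ => ?_
          simp only [Pi.smul_apply, smul_eq_mul, map_mul, hlam]
          by_cases h0 : lam' i j = 0
          · rw [h0, zero_mul, zero_mul]
          · obtain ⟨hiZ, hjZ⟩ := hlam'Z i j h0
            rw [hsyzlift i j (hZ'mem hiZ) (hZ'mem hjZ) l]
        rw [h1, ← hrep']
        simp only [ha', apply_ite π, map_zero]
        rw [sub_self]
      -- divide by s t0
      have hcex : ∀ l, ∃ y : A, g l = s t0 * y ∧ (l ∈ Z' → y = 0) := by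
        intro l
        by_cases hl : l ∈ Z'
        · exact ⟨0, by rw [hgZ l hl, mul_zero], fun _ => rfl⟩
        · have : g l ∈ I := by
            rw [← Ideal.Quotient.eq_zero_iff_mem]
            exact hgI l
          obtain ⟨y, hy⟩ := Ideal.mem_span_singleton'.mp this
          exact ⟨y, by rw [← hy, mul_comm], fun h => absurd h hl⟩
      choose c hc1 hc2 using hcex
      -- new data
      set γ : Fin M → Fin (k+1) → ℕ :=
        fun l t => if t = t0 then α l t0 - (if α l t0 = 0 then 0 else 1) else α l t with hγ
      set e : Fin M → ℕ := fun l => if α l t0 = 0 then 1 else 0 with he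
      set v : Fin M → A := fun l => if α l t0 = 0 then c l else a l with hv
      have hγoff : ∀ l t, t ≠ t0 → γ l t = α l t := by
        intro l t ht; simp only [hγ, if_neg ht]
      have hγt0 : ∀ l, γ l t0 = α l t0 - (if α l t0 = 0 then 0 else 1) := by
        intro l; simp only [hγ, if_pos rfl]
      have ha2 : ∀ l, a l - (∑ i, ∑ j, lam i j • syz s α i j) l = s t0 ^ e l * v l := by
        intro l
        by_cases h0 : α l t0 = 0
        · have := hc1 l
          simp only [hg, Pi.sub_apply, if_pos h0] at this
          simp only [he, hv, if_pos h0, pow_one, this]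
        · have hl : l ∈ Z' := Or.inr h0
          rw [hsumZ' l hl, sub_zero]
          simp only [he, hv, if_neg h0, pow_zero, one_mul]
      -- the divided relation
      have hrel2 : s t0 * ∑ l, v l * ∏ t, s t ^ γ l t = 0 := by
        rw [Finset.mul_sum]
        have step : ∀ l : Fin M, s t0 * (v l * ∏ t, s t ^ γ l t)
            = (a l - (∑ i, ∑ j, lam i j • syz s α i j) l) * ∏ t, s t ^ α l t := by
          intro l
          rw [ha2 l]
          have := keyProd s t0 (γ l) (α l) 1 (e l) (hγoff l) (by
            rw [hγt0 l]
            simp only [he]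
            by_cases h0 : α l t0 = 0 <;> simp [h0] <;> omega)
          calc s t0 * (v l * ∏ t, s t ^ γ l t)
              = v l * (s t0 ^ 1 * ∏ t, s t ^ γ l t) := by ring
            _ = v l * (s t0 ^ e l * ∏ t, s t ^ α l t) := by rw [this]
            _ = s t0 ^ e l * v l * ∏ t, s t ^ α l t := by ring
        rw [Finset.sum_congr rfl fun l _ => step l]
        simp only [sub_mul, Finset.sum_sub_distrib]
        rw [hrel, rep_syzygy, sub_self]
      have hrelv : ∑ l, v l * ∏ t, s t ^ γ l t = 0 := (hs t0).1 _ hrel2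
      -- degree bound
      have hγD : ∑ l, ∑ t, γ l t ≤ D := by
        have hlt : ∑ l, ∑ t, γ l t < ∑ l, ∑ t, α l t := by
          refine Finset.sum_lt_sum (fun l _ => Finset.sum_le_sum fun t _ => ?_)
            ⟨l1, Finset.mem_univ l1, ?_⟩
          · by_cases ht : t = t0
            · subst ht; rw [hγt0 l]; omega
            · rw [hγoff l t ht]
          · refine Finset.sum_lt_sum (fun t _ => ?_) ⟨t0, Finset.mem_univ t0, ?_⟩
            · by_cases ht : t = t0
              · subst ht; rw [hγt0 l1]; omega
              · rw [hγoff l1 t ht]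
            · rw [hγt0 l1]; simp only [if_neg hl1]; omega
        omega
      have hZv : ∀ l ∈ Z, v l = 0 := by
        intro l hl
        simp only [hv]
        by_cases h0 : α l t0 = 0
        · rw [if_pos h0]; exact hc2 l (Or.inl hl)
        · rw [if_neg h0]; exact hZ l hl
      obtain ⟨mu, hmuZ, hmurep⟩ := ihD A s hs M γ hγD Z v hZv hrelv
      -- scaling identity
      set w : Fin M → Fin M → ℕ :=
        fun i j => if α i t0 = 0 ∧ α j t0 = 0 then 1 else 0 with hw
      have hscale : ∀ i j : Fin M, (fun l => s t0 ^ e l * syz s γ i j l)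
          = (s t0 ^ w i j) • syz s α i j := by
        intro i j
        funext l
        simp only [Pi.smul_apply, smul_eq_mul, syz_apply, mul_sub]
        have hXfact : s t0 ^ e i * ∏ t, s t ^ (max (γ i t) (γ j t) - γ i t)
            = s t0 ^ w i j * ∏ t, s t ^ (max (α i t) (α j t) - α i t) := by
          refine keyProd s t0 _ _ _ _ (fun t ht => by rw [hγoff i t ht, hγoff j t ht]) ?_
          rw [hγt0 i, hγt0 j]
          simp only [he, hw]
          by_cases hi : α i t0 = 0 <;> by_cases hj : α j t0 = 0 <;> simp [hi, hj] <;> omega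
        have hYfact : s t0 ^ e j * ∏ t, s t ^ (max (γ i t) (γ j t) - γ j t)
            = s t0 ^ w i j * ∏ t, s t ^ (max (α i t) (α j t) - α j t) := by
          refine keyProd s t0 _ _ _ _ (fun t ht => by rw [hγoff i t ht, hγoff j t ht]) ?_
          rw [hγt0 i, hγt0 j]
          simp only [he, hw]
          by_cases hi : α i t0 = 0 <;> by_cases hj : α j t0 = 0 <;> simp [hi, hj] <;> omega
        congr 1
        · by_cases hli : l = i
          · subst hli; rw [if_pos rfl, if_pos rfl, hXfact]
          · rw [if_neg hli, if_neg hli, mul_zero, mul_zero]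
        · by_cases hlj : l = j
          · subst hlj; rw [if_pos rfl, if_pos rfl, hYfact]
          · rw [if_neg hlj, if_neg hlj, mul_zero, mul_zero]
      -- assemble
      refine ⟨fun i j => lam i j + s t0 ^ w i j * mu i j, ?_, ?_⟩
      · intro i j h
        have h' : lam i j + s t0 ^ w i j * mu i j ≠ 0 := h
        clear h
        rename' h' => h
        by_cases hl : lam i j = 0
        · rw [hl, zero_add] at h
          have hmu : mu i j ≠ 0 := fun h0 => h (by rw [h0, mul_zero])
          exact hmuZ i j hmu
        · obtain ⟨h1, h2⟩ := hlamZ' i j hl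
          exact ⟨fun hh => h1 (Or.inl hh), fun hh => h2 (Or.inl hh)⟩
      · have expand : ∀ l : Fin M, a l = (∑ i, ∑ j, lam i j • syz s α i j) l
            + s t0 ^ e l * v l := by
          intro l; rw [← ha2 l]; ring
        have hv2 : ∀ l : Fin M, s t0 ^ e l * v l
            = (∑ i, ∑ j, (s t0 ^ w i j * mu i j) • syz s α i j) l := by
          intro l
          rw [hmurep]
          rw [Finset.sum_apply, Finset.sum_apply, Finset.mul_sum]
          refine Finset.sum_congr rfl fun i _ => ?_
          rw [Finset.sum_apply, Finset.sum_apply, Finset.mul_sum]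
          refine Finset.sum_congr rfl fun j _ => ?_
          have := congrFun (hscale i j) l
          simp only [Pi.smul_apply, smul_eq_mul] at this ⊢
          calc s t0 ^ e l * (mu i j * syz s γ i j l)
              = mu i j * (s t0 ^ e l * syz s γ i j l) := by ring
            _ = mu i j * (s t0 ^ w i j * syz s α i j l) := by rw [this]
            _ = s t0 ^ w i j * mu i j * syz s α i j l := by ring
        show a = ∑ i : Fin M, ∑ j : Fin M, (lam i j + s t0 ^ w i j * mu i j) • syz s α i j
        have hsplit : (∑ i : Fin M, ∑ j : Fin M, (lam i j + s t0 ^ w i j * mu i j) • syz s α i j)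
            = (∑ i : Fin M, ∑ j : Fin M, lam i j • syz s α i j)
              + ∑ i : Fin M, ∑ j : Fin M, (s t0 ^ w i j * mu i j) • syz s α i j := by
          rw [← Finset.sum_add_distrib]
          refine Finset.sum_congr rfl fun i _ => ?_
          rw [← Finset.sum_add_distrib]
          refine Finset.sum_congr rfl fun j _ => ?_
          rw [add_smul]
        rw [hsplit]
        funext l
        rw [Pi.add_apply, expand l, hv2 l]

/-- Every-permutation weak regularity implies `GoodSeq`. -/
theorem goodSeq_of_perm : ∀ (k : ℕ) (A : Type u) [CommRing A] (s : Fin k → A),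
    (∀ σ : Equiv.Perm (Fin k), ∀ (i : Fin k) (x : A),
      (s ∘ σ) i * x ∈ Ideal.span ((s ∘ σ) '' {j | j < i}) →
        x ∈ Ideal.span ((s ∘ σ) '' {j | j < i})) →
    GoodSeq k A s := by
  intro k
  induction k with
  | zero => intro A _ s _; trivial
  | succ k ihk =>
    intro A _ s hreg t0
    have hempty : {j : Fin (k+1) | j < 0} = (∅ : Set (Fin (k+1))) := by
      ext j; simp [Fin.not_lt_zero]
    constructor
    · -- s t0 is a nonzerodivisor
      intro x hx
      have h := hreg (Equiv.swap t0 0) 0 x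
      rw [hempty] at h
      simp only [Set.image_empty, Ideal.span_empty, Ideal.mem_bot] at h
      apply h
      rw [Function.comp_apply, Equiv.swap_apply_right]
      exact hx
    · -- quotient step
      set I : Ideal A := Ideal.span {s t0} with hI
      set π : A →+* A ⧸ I := Ideal.Quotient.mk I with hπdef
      set s' : Fin k → A ⧸ I := fun t => π (s (t0.succAbove t)) with hs'def
      refine ihk (A ⧸ I) s' fun τ i xq hmem => ?_
      -- the lifted permutation
      set σh : Equiv.Perm (Fin (k+1)) :=
        ((finSuccEquiv' (0 : Fin (k+1))).trans ((Equiv.optionCongr τ).trans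
          (finSuccEquiv' t0).symm)) with hσh
      have hσ0 : σh 0 = t0 := by
        simp only [hσh, Equiv.trans_apply, finSuccEquiv'_at, Equiv.optionCongr_apply,
          Option.map_none, finSuccEquiv'_symm_none]
      have hσsucc : ∀ j : Fin k, σh j.succ = t0.succAbove (τ j) := by
        intro j
        have h1 : (finSuccEquiv' (0 : Fin (k+1))) j.succ = some j := by
          rw [← Fin.zero_succAbove j, finSuccEquiv'_succAbove]
        simp only [hσh, Equiv.trans_apply, h1, Equiv.optionCongr_apply, Option.map_some,
          finSuccEquiv'_symm_some]
      -- set identity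
      have hsetid : (s ∘ σh) '' {j : Fin (k+1) | j < i.succ}
          = insert (s t0) ((fun j => s (t0.succAbove (τ j))) '' {j : Fin k | j < i}) := by
        have h1 : {j : Fin (k+1) | j < i.succ} = insert 0 (Fin.succ '' {j : Fin k | j < i}) := by
          ext j'
          simp only [Set.mem_setOf_eq, Set.mem_insert_iff, Set.mem_image]
          constructor
          · intro hj'
            rcases Fin.eq_zero_or_eq_succ j' with h0 | ⟨jj, rfl⟩
            · exact Or.inl h0
            · exact Or.inr ⟨jj, Fin.succ_lt_succ_iff.mp hj', rfl⟩
          · intro hj'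
            rcases hj' with rfl | ⟨jj, hjj, rfl⟩
            · exact Fin.succ_pos i
            · exact Fin.succ_lt_succ_iff.mpr hjj
        rw [h1, Set.image_insert_eq, ← Set.image_comp]
        have e0 : (s ∘ σh) 0 = s t0 := by rw [Function.comp_apply, hσ0]
        have e1 : (s ∘ σh) ∘ Fin.succ = fun j => s (t0.succAbove (τ j)) := by
          funext jj
          simp only [Function.comp_apply, hσsucc]
        rw [e0, e1]
      -- lifting membership
      set T : Set A := (fun j => s (t0.succAbove (τ j))) '' {j : Fin k | j < i} with hT
      have hmap : Ideal.span ((s' ∘ τ) '' {j : Fin k | j < i}) = Ideal.map π (Ideal.span T) := by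
        rw [Ideal.map_span]
        congr 1
        rw [hT, ← Set.image_comp]
        rfl
      have hlift : ∀ y : A, π y ∈ Ideal.map π (Ideal.span T)
          ↔ y ∈ Ideal.span (insert (s t0) T) := by
        intro y
        rw [show Ideal.span (insert (s t0) T) = Ideal.span T ⊔ I by
          rw [Ideal.span_insert, hI, sup_comm]]
        constructor
        · intro h
          have := Ideal.comap_map_of_surjective π Ideal.Quotient.mk_surjective (Ideal.span T)
          have h2 : y ∈ Ideal.comap π (Ideal.map π (Ideal.span T)) := h
          rw [this] at h2
          rwa [show Ideal.comap π ⊥ = I from by rw [← RingHom.ker_eq_comap_bot, hπdef, Ideal.mk_ker]]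
            at h2
        · intro h
          have h2 : Ideal.span T ⊔ I ≤ Ideal.comap π (Ideal.map π (Ideal.span T)) := by
            refine sup_le (Ideal.le_comap_map) ?_
            intro z hz
            rw [Ideal.mem_comap]
            have hz0 : π z = 0 := by rw [hπdef, Ideal.Quotient.eq_zero_iff_mem]; exact hz
            rw [hz0]
            exact Submodule.zero_mem _
          exact h2 h
      -- now conclude
      obtain ⟨x, rfl⟩ := Ideal.Quotient.mk_surjective xq
      rw [hmap] at hmem ⊢
      rw [hlift]
      have hx : s (t0.succAbove (τ i)) * x ∈ Ideal.span (insert (s t0) T) := by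
        rw [← hlift]
        rw [map_mul]
        exact hmem
      have := hreg σh i.succ x (by
        rw [hsetid]
        show (s ∘ σh) i.succ * x ∈ _
        rw [Function.comp_apply, hσsucc i]
        rw [← hsetid] at hx ⊢
        exact hx)
      rw [hsetid] at this
      exact this

end SyzHelper

open SyzHelper in
/-- the syzygies of terms of `s`-monomial type in `F = S^r` are generated
by the elements `r_{ij}`. -/
theorem syzygies_of_sMonomialType_terms
    {n : ℕ} {R : Type*} [CommRing R]
    {k : ℕ} (s : Fin k → R) (hs : IsPermutableWeakRegularSeq s)
    {r M : ℕ} (c : Fin M → Rˣ) (α : Fin M → Fin k → ℕ)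
    (u : Fin M → (Fin n →₀ ℕ)) (kk : Fin M → Fin r)
    (f : Fin M → (Fin r → MvPolynomial (Fin n) R))
    (hf : ∀ l, f l = Pi.single (kk l)
      (MvPolynomial.monomial (u l) (↑(c l) * ∏ t, s t ^ α l t)))
    (rr : Fin M → Fin M → (Fin M → MvPolynomial (Fin n) R))
    (hrr : ∀ i j, rr i j =
      Pi.single i (MvPolynomial.monomial ((u i ⊔ u j) - u i)
        (↑(c i)⁻¹ * ∏ t, s t ^ (max (α i t) (α j t) - α i t)))
      - Pi.single j (MvPolynomial.monomial ((u i ⊔ u j) - u j)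
        (↑(c j)⁻¹ * ∏ t, s t ^ (max (α i t) (α j t) - α j t))))
    (w : Fin M → MvPolynomial (Fin n) R) :
    (∑ l, w l • f l = 0) ↔
      w ∈ Submodule.span (MvPolynomial (Fin n) R)
        {v | ∃ i j : Fin M, i < j ∧ kk i = kk j ∧ v = rr i j} := by
  classical
  have hswap : ∀ i j : Fin M, rr i j = - rr j i := by
    intro i j
    rw [hrr i j, hrr j i, neg_sub]
    rw [sup_comm (u j) (u i)]
    have e2 : (∏ t, s t ^ (max (α j t) (α i t) - α j t))
        = ∏ t, s t ^ (max (α i t) (α j t) - α j t) :=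
      Finset.prod_congr rfl fun t _ => by rw [max_comm (α j t) (α i t)]
    have e3 : (∏ t, s t ^ (max (α j t) (α i t) - α i t))
        = ∏ t, s t ^ (max (α i t) (α j t) - α i t) :=
      Finset.prod_congr rfl fun t _ => by rw [max_comm (α j t) (α i t)]
    rw [e2, e3]
  have hself : ∀ i : Fin M, rr i i = 0 := fun i => by rw [hrr]; exact sub_self _
  constructor
  · -- forward direction
    intro H
    have hgood : GoodSeq k R s := goodSeq_of_perm k R s fun σ i x h => hs.2 σ i x h
    set a : (Fin n →₀ ℕ) → Fin r → Fin M → R :=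
      fun v q l => if kk l = q ∧ u l ≤ v then MvPolynomial.coeff (v - u l) (w l) else 0 with ha
    have hrelvq : ∀ (v : Fin n →₀ ℕ) (q : Fin r),
        ∑ l, (a v q l * ↑(c l)) * ∏ t, s t ^ α l t = 0 := by
      intro v q
      have h1 : ∀ l : Fin M, MvPolynomial.coeff v (w l * (f l) q)
          = (a v q l * ↑(c l)) * ∏ t, s t ^ α l t := by
        intro l
        rw [hf l, Pi.single_apply]
        by_cases hq : q = kk l
        · rw [if_pos hq, MvPolynomial.coeff_mul_monomial']
          by_cases hu : u l ≤ v
          · rw [if_pos hu]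
            simp only [ha]
            rw [if_pos ⟨hq.symm, hu⟩]
            ring
          · rw [if_neg hu]
            simp only [ha]
            rw [if_neg (fun hc => hu hc.2), zero_mul, zero_mul]
        · rw [if_neg hq, mul_zero, MvPolynomial.coeff_zero]
          simp only [ha]
          rw [if_neg (fun hc => hq hc.1.symm), zero_mul, zero_mul]
      calc ∑ l, (a v q l * ↑(c l)) * ∏ t, s t ^ α l t
          = ∑ l, MvPolynomial.coeff v (w l * (f l) q) :=
            Finset.sum_congr rfl fun l _ => (h1 l).symm
        _ = MvPolynomial.coeff v ((∑ l, w l • f l) q) := by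
            rw [Finset.sum_apply, MvPolynomial.coeff_sum]
            exact Finset.sum_congr rfl fun l _ => by rw [Pi.smul_apply, smul_eq_mul]
        _ = 0 := by rw [H]; simp
    have key : ∀ (v : Fin n →₀ ℕ) (q : Fin r), ∃ lam : Fin M → Fin M → R,
        (∀ i j, lam i j ≠ 0 → (kk i = q ∧ u i ≤ v) ∧ (kk j = q ∧ u j ≤ v)) ∧
        (fun l => a v q l * ↑(c l)) = ∑ i, ∑ j, lam i j • syz s α i j := by
      intro v q
      obtain ⟨lam, h1, h2⟩ := lemT k R s hgood M α {l | ¬(kk l = q ∧ u l ≤ v)}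
        (fun l => a v q l * ↑(c l))
        (fun l hl => by
          simp only [ha]
          rw [if_neg hl, zero_mul])
        (hrelvq v q)
      refine ⟨lam, fun i j hne => ?_, h2⟩
      obtain ⟨hi, hj⟩ := h1 i j hne
      exact ⟨of_not_not hi, of_not_not hj⟩
    choose lam hlam1 hlam2 using key
    set V : Finset (Fin n →₀ ℕ) :=
      Finset.univ.biUnion (fun l : Fin M => (w l).support.image (fun d => d + u l)) with hV
    have stepB : ∀ (v : Fin n →₀ ℕ) (q : Fin r) (l : Fin M),
        (∑ i : Fin M, ∑ j : Fin M,
          (MvPolynomial.monomial (v - (u i ⊔ u j)) (lam v q i j)) • rr i j) l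
        = MvPolynomial.monomial (v - u l) (a v q l) := by
      intro v q l
      have inner : ∀ i j : Fin M,
          (MvPolynomial.monomial (v - (u i ⊔ u j)) (lam v q i j)) * rr i j l
          = MvPolynomial.monomial (v - u l) (↑(c l)⁻¹ * (lam v q i j * syz s α i j l)) := by
        intro i j
        by_cases h0 : lam v q i j = 0
        · simp [h0]
        · obtain ⟨⟨hki, hui⟩, hkj, huj⟩ := hlam1 v q i j h0
          have hsupv : u i ⊔ u j ≤ v := sup_le hui huj
          by_cases hij : i = j
          · subst hij
            rw [hself i, syz_self]
            simp
          · rw [hrr i j, Pi.sub_apply, Pi.single_apply, Pi.single_apply, syz_apply]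
            by_cases hli : l = i
            · subst hli
              rw [if_pos rfl, if_neg hij, if_pos rfl, if_neg hij, sub_zero, sub_zero,
                MvPolynomial.monomial_mul, tsub_add_tsub_cancel hsupv le_sup_left]
              congr 1
              ring
            · by_cases hlj : l = j
              · subst hlj
                rw [if_neg hli, if_pos rfl, if_neg hli, if_pos rfl, zero_sub, zero_sub,
                  mul_neg, mul_neg, mul_neg, map_neg, MvPolynomial.monomial_mul,
                  tsub_add_tsub_cancel hsupv le_sup_right]
                congr 2
                ring
              · rw [if_neg hli, if_neg hlj, if_neg hli, if_neg hlj]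
                simp
      rw [Finset.sum_apply]
      calc ∑ i : Fin M, (∑ j : Fin M,
            (MvPolynomial.monomial (v - (u i ⊔ u j)) (lam v q i j)) • rr i j) l
          = ∑ i : Fin M, ∑ j : Fin M, MvPolynomial.monomial (v - u l)
              (↑(c l)⁻¹ * (lam v q i j * syz s α i j l)) := by
            refine Finset.sum_congr rfl fun i _ => ?_
            rw [Finset.sum_apply]
            refine Finset.sum_congr rfl fun j _ => ?_
            rw [Pi.smul_apply, smul_eq_mul, inner i j]
        _ = MvPolynomial.monomial (v - u l)
              (↑(c l)⁻¹ * ∑ i : Fin M, ∑ j : Fin M, lam v q i j * syz s α i j l) := by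
            rw [Finset.mul_sum, map_sum]
            refine Finset.sum_congr rfl fun i _ => ?_
            rw [Finset.mul_sum, map_sum]
        _ = MvPolynomial.monomial (v - u l) (a v q l) := by
            congr 1
            have := congrFun (hlam2 v q) l
            simp only [Finset.sum_apply, Pi.smul_apply, smul_eq_mul] at this
            rw [← this]
            rw [show (↑(c l)⁻¹ : R) * (a v q l * ↑(c l)) = a v q l * (↑(c l)⁻¹ * ↑(c l)) from by
              ring]
            rw [Units.inv_mul, mul_one]
    have hw' : w = ∑ q : Fin r, ∑ v ∈ V, ∑ i : Fin M, ∑ j : Fin M,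
        (MvPolynomial.monomial (v - (u i ⊔ u j)) (lam v q i j)) • rr i j := by
      funext l
      rw [Finset.sum_apply]
      have colq : ∀ q : Fin r, (∑ v ∈ V, ∑ i : Fin M, ∑ j : Fin M,
          (MvPolynomial.monomial (v - (u i ⊔ u j)) (lam v q i j)) • rr i j) l
          = ∑ v ∈ V, MvPolynomial.monomial (v - u l) (a v q l) := by
        intro q
        rw [Finset.sum_apply]
        exact Finset.sum_congr rfl fun v _ => stepB v q l
      rw [Finset.sum_congr rfl fun q _ => colq q]
      rw [Finset.sum_eq_single (kk l) (fun q _ hq => Finset.sum_eq_zero fun v _ => by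
        simp only [ha]
        rw [if_neg (fun hc => hq hc.1.symm), map_zero]) (fun h => absurd (Finset.mem_univ _) h)]
      -- now the v-sum
      have hterm : ∀ v : Fin n →₀ ℕ,
          (MvPolynomial.monomial (v - u l) (a v (kk l) l) : MvPolynomial (Fin n) R)
          = if u l ≤ v then MvPolynomial.monomial (v - u l)
              (MvPolynomial.coeff (v - u l) (w l)) else 0 := by
        intro v
        by_cases hu : u l ≤ v <;> simp [ha, hu]
      rw [Finset.sum_congr rfl fun v _ => hterm v]
      have hsub : ((w l).support.image (fun d => d + u l)) ⊆ V := by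
        rw [hV]
        exact Finset.subset_biUnion_of_mem
          (fun l : Fin M => (w l).support.image (fun d => d + u l)) (Finset.mem_univ l)
      rw [← Finset.sum_subset hsub (fun v _ hv => by
        by_cases hu : u l ≤ v
        · rw [if_pos hu]
          have hc0 : MvPolynomial.coeff (v - u l) (w l) = 0 := by
            by_contra hc
            exact hv (Finset.mem_image.mpr ⟨v - u l,
              MvPolynomial.mem_support_iff.mpr hc, by rw [tsub_add_cancel_of_le hu]⟩)
          rw [hc0, map_zero]
        · rw [if_neg hu])]
      rw [Finset.sum_image (fun x _ y _ h => by simpa using add_left_injective (u l) h)]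
      exact ((Finset.sum_congr rfl fun d _ => by
        rw [if_pos (le_add_self : u l ≤ d + u l), add_tsub_cancel_right]).trans
        (MvPolynomial.support_sum_monomial_coeff (w l))).symm
    rw [hw']
    refine Submodule.sum_mem _ fun q _ => Submodule.sum_mem _ fun v _ =>
      Submodule.sum_mem _ fun i _ => Submodule.sum_mem _ fun j _ => ?_
    by_cases h0 : lam v q i j = 0
    · rw [h0, map_zero, zero_smul]
      exact Submodule.zero_mem _
    · obtain ⟨⟨hki, hui⟩, hkj, huj⟩ := hlam1 v q i j h0
      have hkk : kk i = kk j := by rw [hki, hkj]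
      rcases lt_trichotomy i j with hij | hij | hij
      · exact Submodule.smul_mem _ _ (Submodule.subset_span ⟨i, j, hij, hkk, rfl⟩)
      · subst hij
        rw [hself i, smul_zero]
        exact Submodule.zero_mem _
      · rw [hswap i j, smul_neg]
        exact Submodule.neg_mem _ (Submodule.smul_mem _ _
          (Submodule.subset_span ⟨j, i, hij, hkk.symm, rfl⟩))
  · -- backward direction
    intro hw
    have sumsingle : ∀ (p : MvPolynomial (Fin n) R) (i0 : Fin M)
        (h : Fin M → (Fin r → MvPolynomial (Fin n) R)),
        ∑ l, (Pi.single i0 p : Fin M → MvPolynomial (Fin n) R) l • h l = p • h i0 := by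
      intro p i0 h
      rw [Finset.sum_eq_single i0]
      · rw [Pi.single_eq_same]
      · intro b _ hb
        rw [Pi.single_eq_of_ne hb, zero_smul]
      · intro hh
        exact absurd (Finset.mem_univ i0) hh
    have smulsingle : ∀ (p x : MvPolynomial (Fin n) R) (q : Fin r),
        p • (Pi.single q x : Fin r → MvPolynomial (Fin n) R) = Pi.single q (p * x) := by
      intro p x q
      funext q'
      by_cases h : q' = q
      · subst h
        rw [Pi.smul_apply, Pi.single_eq_same, Pi.single_eq_same, smul_eq_mul]
      · rw [Pi.smul_apply, Pi.single_eq_of_ne h, Pi.single_eq_of_ne h, smul_zero]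
    set L : (Fin M → MvPolynomial (Fin n) R) →ₗ[MvPolynomial (Fin n) R]
        (Fin r → MvPolynomial (Fin n) R) :=
      { toFun := fun w => ∑ l, w l • f l
        map_add' := fun x y => by
          simp only [Pi.add_apply, add_smul]
          rw [Finset.sum_add_distrib]
        map_smul' := fun cc x => by
          simp only [Pi.smul_apply, smul_eq_mul, RingHom.id_apply]
          rw [Finset.smul_sum]
          exact Finset.sum_congr rfl fun l _ => (smul_smul cc (x l) (f l)).symm } with hL
    have hker : {v | ∃ i j : Fin M, i < j ∧ kk i = kk j ∧ v = rr i j} ⊆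
        (LinearMap.ker L : Set (Fin M → MvPolynomial (Fin n) R)) := by
      rintro vv ⟨i, j, hij, hkkij, rfl⟩
      have : L (rr i j) = 0 := by
        show ∑ l, rr i j l • f l = 0
        simp only [hrr i j, Pi.sub_apply, sub_smul]
        rw [Finset.sum_sub_distrib, sumsingle, sumsingle, hf i, hf j, smulsingle, smulsingle,
          ← hkkij]
        rw [sub_eq_zero]
        rw [MvPolynomial.monomial_mul, MvPolynomial.monomial_mul,
          tsub_add_cancel_of_le (le_sup_left : u i ≤ u i ⊔ u j),
          tsub_add_cancel_of_le (le_sup_right : u j ≤ u i ⊔ u j)]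
        have hco :
            (↑(c i)⁻¹ * ∏ t, s t ^ (max (α i t) (α j t) - α i t)) * (↑(c i) * ∏ t, s t ^ α i t)
            = (↑(c j)⁻¹ * ∏ t, s t ^ (max (α i t) (α j t) - α j t)) *
              (↑(c j) * ∏ t, s t ^ α j t) := by
          calc   (↑(c i)⁻¹ * ∏ t, s t ^ (max (α i t) (α j t) - α i t)) * (↑(c i) * ∏ t, s t ^ α i t)
              = (↑(c i)⁻¹ * ↑(c i)) *
                ((∏ t, s t ^ (max (α i t) (α j t) - α i t)) * ∏ t, s t ^ α i t) := by ring
            _ = ∏ t, s t ^ (fun t => max (α i t) (α j t)) t := by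
                rw [Units.inv_mul, one_mul,
                  prod_pow_sub_mul s (fun t => max (α i t) (α j t)) (α i)
                    (fun t => le_max_left _ _)]
            _ = (↑(c j)⁻¹ * ↑(c j)) *
                ((∏ t, s t ^ (max (α i t) (α j t) - α j t)) * ∏ t, s t ^ α j t) := by
                rw [Units.inv_mul, one_mul,
                  prod_pow_sub_mul s (fun t => max (α i t) (α j t)) (α j)
                    (fun t => le_max_right _ _)]
            _ = (↑(c j)⁻¹ * ∏ t, s t ^ (max (α i t) (α j t) - α j t)) *
                (↑(c j) * ∏ t, s t ^ α j t) := by ring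
        rw [hco]
      exact this
    have : w ∈ LinearMap.ker L := (Submodule.span_le.mpr hker) hw
    exact this
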